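/- In the augmented SAT-to-vertex-cover reduction where each literal l additionally has two auxiliary nodes l' and l'' (with an edge l–l' present exactly when the unit clause l is in F): adding the edge between nodes l and l' yields a graph having a vertex cover of size n + m − r if and only if F ∪ {l} is satisfiable. -/

import Mathlib

abbrev Var := ℕ
abbrev Lit := Var × Bool
abbrev ClauseF := Finset Lit

/-- Nodes of the augmented SAT-to-vertex-cover reduction graph: a variable-gadget node
for each literal `l`, an occurrence node for each occurrence of a literal in a clause,
and two auxiliary nodes `l'` and `l''` for each literal `l`. -/
inductive NodeA
  | lit : Lit → NodeA
  | occ : ClauseF → Lit → NodeA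
  | aux1 : Lit → NodeA
  | aux2 : Lit → NodeA
deriving DecidableEq

/-- `S` is a vertex cover of the augmented reduction graph of the CNF `F` over
variables `V`: variable-gadget edges, clause-clique and occurrence edges for non-unit
clauses, and an edge `l–l'` for each unit clause `l ∈ F`, all have an endpoint in `S`. -/
def IsCoverA (V : Finset Var) (F : Finset ClauseF) (S : Finset NodeA) : Prop :=
  (∀ x ∈ V, NodeA.lit (x, true) ∈ S ∨ NodeA.lit (x, false) ∈ S) ∧
  (∀ γ ∈ F, 1 < γ.card →
    (∀ l ∈ γ, ∀ l' ∈ γ, l ≠ l' → NodeA.occ γ l ∈ S ∨ NodeA.occ γ l' ∈ S) ∧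
    (∀ l ∈ γ, NodeA.occ γ l ∈ S ∨ NodeA.lit l ∈ S)) ∧
  (∀ l : Lit, ({l} : ClauseF) ∈ F → NodeA.lit l ∈ S ∨ NodeA.aux1 l ∈ S)

/-- Satisfiability of a CNF given as a finite set of clauses. -/
def FSat (F : Finset ClauseF) : Prop :=
  ∃ I : Var → Bool, ∀ γ ∈ F, ∃ l ∈ γ, I l.1 = l.2

/-! ### Auxiliary definitions and lemmas -/

private def pairN (x : Var) : Finset NodeA := {NodeA.lit (x, true), NodeA.lit (x, false)}

private def occsN (γ : ClauseF) : Finset NodeA := γ.image (NodeA.occ γ)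

private lemma mem_pairN {x : Var} {a : NodeA} :
    a ∈ pairN x ↔ a = NodeA.lit (x, true) ∨ a = NodeA.lit (x, false) := by
  simp [pairN]

private lemma mem_occsN {γ : ClauseF} {a : NodeA} :
    a ∈ occsN γ ↔ ∃ l ∈ γ, NodeA.occ γ l = a := by
  simp [occsN]

private lemma occ_inj (γ : ClauseF) : Function.Injective (NodeA.occ γ) := by
  intro a b h
  injection h

private lemma sum_eq_of_le {α : Type*} (s : Finset α) (f g : α → ℕ)
    (h : ∀ a ∈ s, g a ≤ f a) (hs : ∑ a ∈ s, f a ≤ ∑ a ∈ s, g a) :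
    ∀ a ∈ s, f a = g a := by
  intro a ha
  by_contra hne
  exact absurd (Finset.sum_lt_sum h ⟨a, ha, lt_of_le_of_ne (h a ha) fun e => hne e.symm⟩)
    (not_lt.mpr hs)

private lemma cover_count (V : Finset Var) (F : Finset ClauseF) (S E : Finset NodeA)
    (hES : E ⊆ S) (hEaux : ∀ a ∈ E, ∃ l, a = NodeA.aux1 l) :
    (∑ x ∈ V, (S ∩ pairN x).card) + (∑ γ ∈ F, (S ∩ occsN γ).card) + E.card ≤ S.card := by
  classical
  have hd1 : ∀ x ∈ V, ∀ y ∈ V, x ≠ y → Disjoint (S ∩ pairN x) (S ∩ pairN y) := by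
    intro x _ y _ hxy
    rw [Finset.disjoint_left]
    intro a ha hb
    rcases mem_pairN.mp (Finset.mem_of_mem_inter_right ha) with h | h <;>
      rcases mem_pairN.mp (Finset.mem_of_mem_inter_right hb) with h' | h' <;>
      · subst h
        injection h' with e
        exact hxy (congrArg Prod.fst e)
  have hd2 : ∀ γ ∈ F, ∀ γ' ∈ F, γ ≠ γ' → Disjoint (S ∩ occsN γ) (S ∩ occsN γ') := by
    intro γ _ γ' _ hne
    rw [Finset.disjoint_left]
    intro a ha hb
    obtain ⟨l, _, he⟩ := mem_occsN.mp (Finset.mem_of_mem_inter_right ha)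
    obtain ⟨l', _, he'⟩ := mem_occsN.mp (Finset.mem_of_mem_inter_right hb)
    have : NodeA.occ γ l = NodeA.occ γ' l' := he.trans he'.symm
    injection this with e1 e2
    exact hne e1
  have hd3 : Disjoint (V.biUnion fun x => S ∩ pairN x) (F.biUnion fun γ => S ∩ occsN γ) := by
    rw [Finset.disjoint_left]
    intro a ha hb
    obtain ⟨x, _, ha'⟩ := Finset.mem_biUnion.mp ha
    obtain ⟨γ, _, hb'⟩ := Finset.mem_biUnion.mp hb
    obtain ⟨l, _, he⟩ := mem_occsN.mp (Finset.mem_of_mem_inter_right hb')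
    rcases mem_pairN.mp (Finset.mem_of_mem_inter_right ha') with h | h <;>
      · subst h; exact NodeA.noConfusion he
  have hd4 : Disjoint ((V.biUnion fun x => S ∩ pairN x) ∪ (F.biUnion fun γ => S ∩ occsN γ)) E := by
    rw [Finset.disjoint_left]
    intro a ha hb
    obtain ⟨l, rfl⟩ := hEaux a hb
    rcases Finset.mem_union.mp ha with h | h
    · obtain ⟨x, _, h'⟩ := Finset.mem_biUnion.mp h
      rcases mem_pairN.mp (Finset.mem_of_mem_inter_right h') with e | e <;> exact NodeA.noConfusion e
    · obtain ⟨γ, _, h'⟩ := Finset.mem_biUnion.mp h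
      obtain ⟨l', _, e⟩ := mem_occsN.mp (Finset.mem_of_mem_inter_right h')
      exact NodeA.noConfusion e
  have hsub : ((V.biUnion fun x => S ∩ pairN x) ∪ (F.biUnion fun γ => S ∩ occsN γ)) ∪ E ⊆ S := by
    refine Finset.union_subset (Finset.union_subset ?_ ?_) hES <;>
      exact Finset.biUnion_subset.mpr fun _ _ => Finset.inter_subset_left
  calc (∑ x ∈ V, (S ∩ pairN x).card) + (∑ γ ∈ F, (S ∩ occsN γ).card) + E.card
      = (((V.biUnion fun x => S ∩ pairN x) ∪ (F.biUnion fun γ => S ∩ occsN γ)) ∪ E).card := by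
        rw [Finset.card_union_of_disjoint hd4, Finset.card_union_of_disjoint hd3,
          Finset.card_biUnion hd1, Finset.card_biUnion hd2]
    _ ≤ S.card := Finset.card_le_card hsub

/-- Adding the edge between the nodes `l₀` and `l₀'` yields a graph having a vertex
cover of size `n + m - r` iff `F ∪ {l₀}` is satisfiable. -/
theorem stmt11 (V : Finset Var) (F : Finset ClauseF)
    (hvars : ∀ γ ∈ F, ∀ l ∈ γ, l.1 ∈ V) (l₀ : Lit) (hl₀ : l₀.1 ∈ V) :
    (∃ S : Finset NodeA, IsCoverA V F S ∧
        (NodeA.lit l₀ ∈ S ∨ NodeA.aux1 l₀ ∈ S) ∧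
        S.card = V.card + (∑ γ ∈ F, γ.card) - F.card) ↔
      FSat (insert {l₀} F) := by
  classical
  constructor
  · rintro ⟨S, ⟨h1, h2, h3⟩, hl0, hcard⟩
    have hn : 1 ≤ V.card := Finset.card_pos.mpr ⟨l₀.1, hl₀⟩
    have hf : ∀ x ∈ V, 1 ≤ (S ∩ pairN x).card := by
      intro x hx
      refine Finset.card_pos.mpr ?_
      rcases h1 x hx with h | h
      · exact ⟨_, Finset.mem_inter.mpr ⟨h, mem_pairN.mpr (Or.inl rfl)⟩⟩
      · exact ⟨_, Finset.mem_inter.mpr ⟨h, mem_pairN.mpr (Or.inr rfl)⟩⟩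
    have hg : ∀ γ ∈ F, γ.card - 1 ≤ (S ∩ occsN γ).card := by
      intro γ hγ
      set C := γ.filter (fun l => NodeA.occ γ l ∈ S) with hC
      set D := γ.filter (fun l => NodeA.occ γ l ∉ S) with hD
      have hCsub : C.image (NodeA.occ γ) ⊆ S ∩ occsN γ := by
        intro a ha
        obtain ⟨l, hl, rfl⟩ := Finset.mem_image.mp ha
        exact Finset.mem_inter.mpr ⟨(Finset.mem_filter.mp hl).2,
          mem_occsN.mpr ⟨l, (Finset.mem_filter.mp hl).1, rfl⟩⟩
      have hCcard : C.card ≤ (S ∩ occsN γ).card := by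
        calc C.card = (C.image (NodeA.occ γ)).card :=
              (Finset.card_image_of_injective _ (occ_inj γ)).symm
          _ ≤ _ := Finset.card_le_card hCsub
      have hDone : D.card ≤ 1 := by
        by_cases hc : 1 < γ.card
        · rw [Finset.card_le_one]
          intro a ha b hb
          by_contra hab
          have hma := Finset.mem_filter.mp ha
          have hmb := Finset.mem_filter.mp hb
          rcases (h2 γ hγ hc).1 a hma.1 b hmb.1 hab with h | h
          · exact hma.2 h
          · exact hmb.2 h
        · calc D.card ≤ γ.card := Finset.card_le_card (Finset.filter_subset _ _)
            _ ≤ 1 := by omega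
      have hcup : γ ⊆ C ∪ D := by
        intro l hl
        by_cases h : NodeA.occ γ l ∈ S
        · exact Finset.mem_union_left _ (Finset.mem_filter.mpr ⟨hl, h⟩)
        · exact Finset.mem_union_right _ (Finset.mem_filter.mpr ⟨hl, h⟩)
      have := Finset.card_le_card hcup
      have := Finset.card_union_le C D
      omega
    have hfsum : V.card ≤ ∑ x ∈ V, (S ∩ pairN x).card := by
      calc V.card = ∑ _x ∈ V, 1 := Finset.card_eq_sum_ones V
        _ ≤ _ := Finset.sum_le_sum hf
    have hgsum : (∑ γ ∈ F, (γ.card - 1)) ≤ ∑ γ ∈ F, (S ∩ occsN γ).card := Finset.sum_le_sum hg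
    have hmain : (∑ x ∈ V, (S ∩ pairN x).card) + (∑ γ ∈ F, (S ∩ occsN γ).card) ≤ S.card := by
      have := cover_count V F S ∅ (Finset.empty_subset S) (by simp)
      simpa using this
    by_cases hE : (∅ : ClauseF) ∈ F
    · exfalso
      have hsplit : (∑ γ ∈ F, (γ.card - 1)) = ∑ γ ∈ F.erase ∅, (γ.card - 1) := by
        rw [← Finset.add_sum_erase F _ hE]
        simp
      have hm : (∑ γ ∈ F, γ.card) = ∑ γ ∈ F.erase ∅, γ.card := by
        rw [← Finset.add_sum_erase F _ hE]
        simp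
      have hXr : (∑ γ ∈ F.erase ∅, (γ.card - 1)) + (F.erase ∅).card = ∑ γ ∈ F.erase ∅, γ.card := by
        rw [Finset.card_eq_sum_ones, ← Finset.sum_add_distrib]
        refine Finset.sum_congr rfl fun γ hγ => ?_
        have : γ.Nonempty := Finset.nonempty_iff_ne_empty.mpr (Finset.ne_of_mem_erase hγ)
        have := Finset.card_pos.mpr this
        omega
      have hrc : (F.erase ∅).card = F.card - 1 := Finset.card_erase_of_mem hE
      have hr : 1 ≤ F.card := Finset.card_pos.mpr ⟨∅, hE⟩
      omega
    · have hXr : (∑ γ ∈ F, (γ.card - 1)) + F.card = ∑ γ ∈ F, γ.card := by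
        rw [Finset.card_eq_sum_ones, ← Finset.sum_add_distrib]
        refine Finset.sum_congr rfl fun γ hγ => ?_
        have : γ.Nonempty := Finset.nonempty_iff_ne_empty.mpr (fun h => hE (h ▸ hγ))
        have := Finset.card_pos.mpr this
        omega
      have hfeq : (∑ x ∈ V, (S ∩ pairN x).card) = V.card := by omega
      have hgeq : (∑ γ ∈ F, (S ∩ occsN γ).card) = ∑ γ ∈ F, (γ.card - 1) := by omega
      have feq : ∀ x ∈ V, (S ∩ pairN x).card = 1 := by
        refine sum_eq_of_le V _ (fun _ => 1) hf ?_
        rw [← Finset.card_eq_sum_ones]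
        omega
      have geq : ∀ γ ∈ F, (S ∩ occsN γ).card = γ.card - 1 :=
        sum_eq_of_le F _ _ hg (le_of_eq hgeq)
      have haux : ∀ l : Lit, NodeA.aux1 l ∉ S := by
        intro l hlS
        have := cover_count V F S {NodeA.aux1 l} (Finset.singleton_subset_iff.mpr hlS)
          (fun a ha => ⟨l, Finset.mem_singleton.mp ha⟩)
        simp only [Finset.card_singleton] at this
        omega
      set I : Var → Bool := fun x => if NodeA.lit (x, true) ∈ S then true else false with hIdef
      have hIS : ∀ x ∈ V, NodeA.lit (x, I x) ∈ S := by
        intro x hx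
        by_cases h : NodeA.lit (x, true) ∈ S
        · have e : I x = true := by simp [hIdef, h]
          rw [e]; exact h
        · rcases h1 x hx with h' | h'
          · exact absurd h' h
          · simpa [hIdef, h] using h'
      have hUniq : ∀ x ∈ V, ∀ b, NodeA.lit (x, b) ∈ S → I x = b := by
        intro x hx b hb
        have m1 : NodeA.lit (x, b) ∈ S ∩ pairN x :=
          Finset.mem_inter.mpr ⟨hb, mem_pairN.mpr (by cases b <;> simp)⟩
        have m2 : NodeA.lit (x, I x) ∈ S ∩ pairN x :=
          Finset.mem_inter.mpr ⟨hIS x hx, mem_pairN.mpr (by cases h : I x <;> simp)⟩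
        have := Finset.card_le_one.mp (le_of_eq (feq x hx)) _ m2 _ m1
        injection this with e
        exact congrArg Prod.snd e
      refine ⟨I, ?_⟩
      intro γ hγ
      rcases Finset.mem_insert.mp hγ with rfl | hγF
      · refine ⟨l₀, Finset.mem_singleton_self _, ?_⟩
        have hlS : NodeA.lit l₀ ∈ S := hl0.resolve_right (haux l₀)
        exact hUniq l₀.1 hl₀ l₀.2 hlS
      · have hne : γ.Nonempty := Finset.nonempty_iff_ne_empty.mpr (fun h => hE (h ▸ hγF))
        by_cases h1c : 1 < γ.card
        · have hlt : (S ∩ occsN γ).card < (occsN γ).card := by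
            rw [geq γ hγF, occsN, Finset.card_image_of_injective _ (occ_inj γ)]
            have := Finset.card_pos.mpr hne
            omega
          have hnsub : ¬ occsN γ ⊆ S := by
            intro hsub
            rw [Finset.inter_eq_right.mpr hsub] at hlt
            exact lt_irrefl _ hlt
          obtain ⟨a, haocc, haS⟩ := Finset.not_subset.mp hnsub
          obtain ⟨l, hlγ, rfl⟩ := mem_occsN.mp haocc
          have hlit : NodeA.lit l ∈ S := ((h2 γ hγF h1c).2 l hlγ).resolve_left haS
          exact ⟨l, hlγ, hUniq l.1 (hvars γ hγF l hlγ) l.2 hlit⟩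
        · have hc1 : γ.card = 1 := by
            have := Finset.card_pos.mpr hne
            omega
          obtain ⟨l, rfl⟩ := Finset.card_eq_one.mp hc1
          have hlit : NodeA.lit l ∈ S := (h3 l hγF).resolve_right (haux l)
          exact ⟨l, Finset.mem_singleton_self l,
            hUniq l.1 (hvars _ hγF l (Finset.mem_singleton_self l)) l.2 hlit⟩
  · rintro ⟨I, hI⟩
    have hI0 : I l₀.1 = l₀.2 := by
      obtain ⟨l, hl, h⟩ := hI {l₀} (Finset.mem_insert_self _ _)
      rw [Finset.mem_singleton] at hl
      subst hl
      exact h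
    have hIF : ∀ γ : ClauseF, ∃ l : Lit, γ ∈ F → l ∈ γ ∧ I l.1 = l.2 := by
      intro γ
      by_cases h : γ ∈ F
      · obtain ⟨l, hl, hIl⟩ := hI γ (Finset.mem_insert_of_mem h)
        exact ⟨l, fun _ => ⟨hl, hIl⟩⟩
      · exact ⟨l₀, fun hc => absurd hc h⟩
    choose w hw using hIF
    set S : Finset NodeA := (V.image fun x => NodeA.lit (x, I x)) ∪
      F.biUnion (fun γ => (γ.erase (w γ)).image (NodeA.occ γ)) with hS
    have memlit : ∀ x ∈ V, NodeA.lit (x, I x) ∈ S := by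
      intro x hx
      rw [hS]
      exact Finset.mem_union_left _ (Finset.mem_image_of_mem _ hx)
    have memlit' : ∀ l : Lit, l.1 ∈ V → I l.1 = l.2 → NodeA.lit l ∈ S := by
      intro l h1 h2
      have := memlit l.1 h1
      rwa [h2, Prod.mk.eta] at this
    have memocc : ∀ γ ∈ F, ∀ l ∈ γ, l ≠ w γ → NodeA.occ γ l ∈ S := by
      intro γ hγ l hl hne
      rw [hS]
      exact Finset.mem_union_right _ (Finset.mem_biUnion.mpr
        ⟨γ, hγ, Finset.mem_image_of_mem _ (Finset.mem_erase.mpr ⟨hne, hl⟩)⟩)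
    refine ⟨S, ⟨?_, ?_, ?_⟩, Or.inl (memlit' l₀ hl₀ hI0), ?_⟩
    · intro x hx
      have h := memlit x hx
      cases hIx : I x
      · rw [hIx] at h
        exact Or.inr h
      · rw [hIx] at h
        exact Or.inl h
    · intro γ hγ _
      constructor
      · intro l hl l' hl' hne
        by_cases h : l = w γ
        · subst h
          exact Or.inr (memocc γ hγ l' hl' (fun e => hne e.symm))
        · exact Or.inl (memocc γ hγ l hl h)
      · intro l hl
        by_cases h : l = w γ
        · subst h
          exact Or.inr (memlit' _ (hvars γ hγ _ hl) (hw γ hγ).2)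
        · exact Or.inl (memocc γ hγ l hl h)
    · intro l hunit
      have hwl : w {l} = l := Finset.mem_singleton.mp (hw _ hunit).1
      have hIl : I l.1 = l.2 := by
        have := (hw _ hunit).2
        rwa [hwl] at this
      exact Or.inl (memlit' l (hvars _ hunit l (Finset.mem_singleton_self l)) hIl)
    · have hdisj : Disjoint (V.image fun x => NodeA.lit (x, I x))
          (F.biUnion fun γ => (γ.erase (w γ)).image (NodeA.occ γ)) := by
        rw [Finset.disjoint_left]
        rintro a ha hb
        obtain ⟨x, _, rfl⟩ := Finset.mem_image.mp ha
        obtain ⟨γ, _, hb'⟩ := Finset.mem_biUnion.mp hb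
        obtain ⟨l, _, he⟩ := Finset.mem_image.mp hb'
        exact NodeA.noConfusion he
      have hcard1 : (V.image fun x => NodeA.lit (x, I x)).card = V.card := by
        refine Finset.card_image_of_injOn ?_
        intro x _ y _ h
        injection h with e
        exact congrArg Prod.fst e
      have hcard2 : (F.biUnion fun γ => (γ.erase (w γ)).image (NodeA.occ γ)).card
          = ∑ γ ∈ F, (γ.card - 1) := by
        rw [Finset.card_biUnion]
        · refine Finset.sum_congr rfl fun γ hγ => ?_
          rw [Finset.card_image_of_injective _ (occ_inj γ),
            Finset.card_erase_of_mem (hw γ hγ).1]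
        · intro γ hγ γ' hγ' hne
          show Disjoint _ _
          rw [Finset.disjoint_left]
          rintro a ha hb
          obtain ⟨l, _, rfl⟩ := Finset.mem_image.mp ha
          obtain ⟨l', _, he⟩ := Finset.mem_image.mp hb
          injection he with e1 e2
          exact hne e1.symm
      have hXr : (∑ γ ∈ F, (γ.card - 1)) + F.card = ∑ γ ∈ F, γ.card := by
        rw [Finset.card_eq_sum_ones, ← Finset.sum_add_distrib]
        refine Finset.sum_congr rfl fun γ hγ => ?_
        have := Finset.card_pos.mpr ⟨w γ, (hw γ hγ).1⟩
        omega
      rw [hS, Finset.card_union_of_disjoint hdisj, hcard1, hcard2]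
      omega
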